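/- Let n ≥ 2 and let X be an n-Hausdorff quasiregular homogeneous space. Then |X| ≤ 2^{c(X)·πχ(X)}. -/

import Mathlib

open Cardinal Set

/-- The cellularity of `X`: the supremum of the cardinalities of pairwise
disjoint families of nonempty open sets, taken at least `ℵ₀`. -/
noncomputable def cellularity (X : Type u) [TopologicalSpace X] : Cardinal.{u} :=
  max ℵ₀ (⨆ 𝒰 : {𝒰 : Set (Set X) //
    (∀ U ∈ 𝒰, IsOpen U ∧ U.Nonempty) ∧ 𝒰.PairwiseDisjoint id}, #𝒰.1)

/-- `B` is a local π-base at `x`: a family of nonempty open sets such that every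
open neighbourhood of `x` contains a member of `B`. -/
def IsLocalPiBase {X : Type u} [TopologicalSpace X] (x : X) (B : Set (Set X)) : Prop :=
  (∀ U ∈ B, IsOpen U ∧ U.Nonempty) ∧ ∀ V : Set X, IsOpen V → x ∈ V → ∃ U ∈ B, U ⊆ V

/-- The π-character of `X`: the supremum over `x ∈ X` of the least cardinality
of a local π-base at `x`, taken at least `ℵ₀`. -/
noncomputable def piCharacter (X : Type u) [TopologicalSpace X] : Cardinal.{u} :=
  max ℵ₀ (⨆ x : X, sInf {κ | ∃ B : Set (Set X), IsLocalPiBase x B ∧ #B = κ})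

/-- A space is homogeneous if for all `x, y` some self-homeomorphism maps `x`
to `y`. -/
def Homogeneous (X : Type*) [TopologicalSpace X] : Prop :=
  ∀ x y : X, ∃ h : X ≃ₜ X, h x = y

/-- A space is `n`-Hausdorff if any `n` distinct points admit open
neighbourhoods with empty total intersection. -/
def NHausdorff (n : ℕ) (X : Type*) [TopologicalSpace X] : Prop :=
  ∀ f : Fin n ↪ X, ∃ U : Fin n → Set X,
    (∀ i, IsOpen (U i) ∧ f i ∈ U i) ∧ ⋂ i, U i = ∅

/-- A space is quasiregular if every nonempty open set contains a nonempty
regular closed set, i.e. the closure of some nonempty open set. -/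
def Quasiregular (X : Type*) [TopologicalSpace X] : Prop :=
  ∀ U : Set X, IsOpen U → U.Nonempty →
    ∃ V : Set X, IsOpen V ∧ V.Nonempty ∧ closure V ⊆ U

/-! ### Auxiliary lemmas -/

/-- Counting subsets of cardinality at most `c` of a set `W`. -/
lemma aux_mk_small_subsets {Z : Type u} (W : Set Z) (c : Cardinal.{u}) :
    #{A : Set Z // A ⊆ W ∧ #A ≤ c} ≤ (#W + 1) ^ c := by
  classical
  -- map each such `A` to a function `c.ord.toType → Option W`
  have hmk : #(c.ord.ToType) = c := Cardinal.mk_ord_toType c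
  have key : ∀ A : {A : Set Z // A ⊆ W ∧ #A ≤ c},
      ∃ g : c.ord.ToType → Option W, ∀ z : Z, z ∈ A.1 ↔ ∃ t w, g t = some w ∧ (w : Z) = z := by
    intro A
    have hle : #A.1 ≤ #(c.ord.ToType) := by rw [hmk]; exact A.2.2
    obtain ⟨f⟩ := Cardinal.le_def _ _ |>.mp hle
    refine ⟨fun t => if h : ∃ a : A.1, f a = t then some ⟨(h.choose : Z), A.2.1 h.choose.2⟩
      else none, ?_⟩
    intro z
    constructor
    · intro hz
      refine ⟨f ⟨z, hz⟩, ⟨z, A.2.1 hz⟩, ?_, rfl⟩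
      have h : ∃ a : A.1, f a = f ⟨z, hz⟩ := ⟨⟨z, hz⟩, rfl⟩
      simp only [dif_pos h]
      have : h.choose = ⟨z, hz⟩ := f.injective h.choose_spec
      simp [this]
    · rintro ⟨t, w, hgt, rfl⟩
      by_cases h : ∃ a : A.1, f a = t
      · simp only [dif_pos h] at hgt
        have : (w : Z) = (h.choose : Z) := by
          have := Option.some_injective _ hgt; exact congrArg Subtype.val this.symm
        rw [this]; exact h.choose.2
      · simp only [dif_neg h] at hgt; exact absurd hgt (by simp)
  choose g hg using key
  have hinj : Function.Injective g := by
    intro A1 A2 h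
    apply Subtype.ext
    ext z
    rw [hg A1 z, hg A2 z, h]
  calc #{A : Set Z // A ⊆ W ∧ #A ≤ c} ≤ #(c.ord.ToType → Option W) :=
        Cardinal.mk_le_of_injective hinj
    _ = (#W + 1) ^ c := by
        rw [← Cardinal.power_def, Cardinal.mk_option, hmk]

/-- There is a local π-base of size at most `piCharacter X` at every point. -/
lemma aux_exists_small_piBase (X : Type u) [TopologicalSpace X] (z : X) :
    ∃ B : Set (Set X), IsLocalPiBase z B ∧ #B ≤ piCharacter X := by
  have hne : {κ | ∃ B : Set (Set X), IsLocalPiBase z B ∧ #B = κ}.Nonempty := by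
    refine ⟨#{U : Set X | IsOpen U ∧ U.Nonempty}, {U | IsOpen U ∧ U.Nonempty}, ⟨?_, ?_⟩, rfl⟩
    · exact fun U hU => hU
    · exact fun V hV hzV => ⟨V, ⟨hV, ⟨z, hzV⟩⟩, subset_rfl⟩
  obtain ⟨B, hB, hBcard⟩ := csInf_mem hne
  refine ⟨B, hB, ?_⟩
  rw [hBcard]
  refine le_trans ?_ (le_max_right _ _)
  exact le_ciSup (Cardinal.bddAbove_range _) z

/-- Cellular families have size at most the cellularity. -/
lemma aux_cellular_le (X : Type u) [TopologicalSpace X] {M : Set (Set X)}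
    (h1 : ∀ U ∈ M, IsOpen U ∧ U.Nonempty) (h2 : M.PairwiseDisjoint id) :
    #M ≤ cellularity X := by
  refine le_trans ?_ (le_max_right _ _)
  exact le_ciSup (Cardinal.bddAbove_range
    (fun 𝒰 : {𝒰 : Set (Set X) // (∀ U ∈ 𝒰, IsOpen U ∧ U.Nonempty) ∧ 𝒰.PairwiseDisjoint id} =>
      #𝒰.1)) ⟨M, h1, h2⟩

/-- The fundamental construction: a "θ-dense" set of size at most
`2 ^ (cellularity X * piCharacter X)`, meeting the closure of every nonempty open set. -/
lemma aux_exists_theta_dense (X : Type u) [TopologicalSpace X] [Nonempty X] :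
    ∃ D : Set X, #D ≤ 2 ^ (cellularity X * piCharacter X) ∧
      ∀ V : Set X, IsOpen V → V.Nonempty → (closure V ∩ D).Nonempty := by
  classical
  set c := cellularity X with hc
  set π := piCharacter X with hπdef
  set κ := c * π with hκdef
  have hc0 : ℵ₀ ≤ c := le_max_left _ _
  have hπ0 : ℵ₀ ≤ π := le_max_left _ _
  have h1π : (1 : Cardinal) ≤ π := le_trans Cardinal.one_le_aleph0 hπ0
  have h1c : (1 : Cardinal) ≤ c := le_trans Cardinal.one_le_aleph0 hc0
  have hcκ : c ≤ κ := by
    calc c = c * 1 := (mul_one c).symm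
    _ ≤ c * π := mul_le_mul_right h1π c
  have hπκ : π ≤ κ := by
    calc π = 1 * π := (one_mul π).symm
    _ ≤ c * π := mul_le_mul_left h1c π
  have hκ0 : ℵ₀ ≤ κ := hc0.trans hcκ
  have h2κ : ℵ₀ ≤ 2 ^ κ := hκ0.trans (Cardinal.cantor κ).le
  have hκκ : κ * κ = κ := Cardinal.mul_eq_self hκ0
  have hpow : ((2 : Cardinal) ^ κ) * (2 ^ κ) = 2 ^ κ := Cardinal.mul_eq_self h2κ
  -- choose local π-bases everywhere
  choose ℬ hℬ hℬcard using fun z => aux_exists_small_piBase X z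
  -- witness function: a point outside a given non-dense closure
  set pfn : Set (Set X) → X := fun A =>
    if h : (closure (⋃₀ A))ᶜ.Nonempty then h.choose else Classical.ofNonempty with hpfndef
  have hpfn : ∀ A : Set (Set X), closure (⋃₀ A) ≠ Set.univ → pfn A ∉ closure (⋃₀ A) := by
    intro A hA
    have hne : (closure (⋃₀ A))ᶜ.Nonempty := nonempty_compl.mpr hA
    have heq : pfn A = hne.choose := by simp only [hpfndef]; exact dif_pos hne
    rw [heq]
    exact hne.choose_spec
  set T := (Order.succ c).ord.ToType with hTdef
  set BS : Set X → Set (Set X) := fun S => ⋃ z ∈ S, ℬ z with hBSdef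
  have hBSmono : ∀ {S S' : Set X}, S ⊆ S' → BS S ⊆ BS S' := by
    intro S S' hss
    exact biUnion_subset_biUnion_left hss
  set SS : Set X → Set (Set (Set X)) := fun S => {A | A ⊆ BS S ∧ #A ≤ c} with hSSdef
  haveI : IsWellOrder T (· < ·) :=
    isWellOrder_lt
  set F : (t : T) → ((s : T) → s < t → Set X) → Set X :=
    fun t ih => (⋃ s : {s : T // s < t}, ih s.1 s.2) ∪
      (pfn '' SS (⋃ s : {s : T // s < t}, ih s.1 s.2)) with hFdef
  set Dfun : T → Set X := IsWellFounded.fix (· < ·) F with hDfundef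
  have hfix : ∀ t : T, Dfun t = F t (fun s _ => Dfun s) := by
    intro t; exact IsWellFounded.fix_eq (· < ·) F t
  set prev : T → Set X := fun t => ⋃ s : {s : T // s < t}, Dfun s.1 with hprevdef
  have hDt : ∀ t : T, Dfun t = prev t ∪ pfn '' SS (prev t) := fun t => hfix t
  set D : Set X := ⋃ t : T, Dfun t with hDdef
  have hmono : ∀ s t : T, s < t → Dfun s ⊆ prev t := fun s t hst =>
    subset_iUnion (fun s : {s : T // s < t} => Dfun s.1) ⟨s, hst⟩
  -- key closure property of `D`
  have hkey : ∀ A : Set (Set X), A ⊆ BS D → #A ≤ c → pfn A ∈ D := by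
    intro A hAsub hAcard
    have hz : ∀ B : A, ∃ t : T, B.1 ∈ BS (Dfun t) := by
      intro B
      obtain ⟨z, hzD, hzB⟩ := mem_iUnion₂.mp (hAsub B.2)
      obtain ⟨t, ht⟩ := mem_iUnion.mp hzD
      exact ⟨t, mem_iUnion₂.mpr ⟨z, ht, hzB⟩⟩
    choose st hst using hz
    have hbdd : Set.Bounded (· < ·) (Set.range st) := by
      refine not_isCofinal_iff.mp fun hcof => ?_
      have h := Order.cof_le hcof
      rw [Ordinal.cof_toType, Cardinal.IsRegular.cof_ord (Cardinal.isRegular_succ hc0)] at h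
      exact (lt_of_le_of_lt (Cardinal.mk_range_le.trans hAcard) (Order.lt_succ c)).not_ge h
    obtain ⟨t, ht⟩ := hbdd
    have hA' : A ∈ SS (prev t) := by
      refine ⟨?_, hAcard⟩
      intro B hB
      have hlt : st ⟨B, hB⟩ < t := ht _ (mem_range_self _)
      exact hBSmono (hmono _ _ hlt) (hst ⟨B, hB⟩)
    have hmem : pfn A ∈ Dfun t := by
      rw [hDt t]; exact Or.inr (mem_image_of_mem _ hA')
    exact mem_iUnion.mpr ⟨t, hmem⟩
  -- cardinality bounds
  have hTcard : #T ≤ 2 ^ κ := by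
    rw [hTdef, Cardinal.mk_toType, Cardinal.card_ord]
    exact le_trans (Order.succ_le_of_lt (Cardinal.cantor c))
      (Cardinal.power_le_power_left two_ne_zero hcκ)
  have hone : (1 : Cardinal) ≤ 2 ^ κ := le_trans Cardinal.one_le_aleph0 h2κ
  have haddone : (2 : Cardinal) ^ κ + 1 ≤ 2 ^ κ := by
    calc (2 : Cardinal) ^ κ + 1 ≤ 2 ^ κ + 2 ^ κ := add_le_add_right hone _
    _ = 2 ^ κ := Cardinal.add_eq_self h2κ
  have hcard : ∀ t : T, #(Dfun t) ≤ 2 ^ κ := by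
    have hind : ∀ t : T, (∀ s : T, s < t → #(Dfun s) ≤ 2 ^ κ) → #(Dfun t) ≤ 2 ^ κ := by
      intro t ih
      have hprevcard : #(prev t) ≤ 2 ^ κ := by
        calc #(prev t) ≤ Cardinal.sum (fun s : {s : T // s < t} => #(Dfun s.1)) :=
              Cardinal.mk_iUnion_le_sum_mk
        _ ≤ Cardinal.sum (fun _ : {s : T // s < t} => 2 ^ κ) :=
              Cardinal.sum_le_sum _ _ (fun s => ih s.1 s.2)
        _ = #{s : T // s < t} * 2 ^ κ := Cardinal.sum_const' _ _
        _ ≤ 2 ^ κ * 2 ^ κ := mul_le_mul' (le_trans (Cardinal.mk_subtype_le _) hTcard) le_rfl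
        _ = 2 ^ κ := hpow
      have hW : #(BS (prev t)) ≤ 2 ^ κ := by
        have h1 : BS (prev t) = ⋃ z : prev t, ℬ z.1 := biUnion_eq_iUnion _ _
        rw [h1]
        calc #(⋃ z : prev t, ℬ z.1) ≤ Cardinal.sum (fun z : prev t => #(ℬ z.1)) :=
              Cardinal.mk_iUnion_le_sum_mk
        _ ≤ Cardinal.sum (fun _ : prev t => 2 ^ κ) :=
              Cardinal.sum_le_sum _ _
                (fun z => le_trans (hℬcard z.1) (hπκ.trans (Cardinal.cantor κ).le))
        _ = #(prev t) * 2 ^ κ := Cardinal.sum_const' _ _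
        _ ≤ 2 ^ κ * 2 ^ κ := mul_le_mul' hprevcard le_rfl
        _ = 2 ^ κ := hpow
      have hS : #(SS (prev t)) ≤ 2 ^ κ := by
        calc #(SS (prev t)) ≤ (#(BS (prev t)) + 1) ^ c :=
              aux_mk_small_subsets (BS (prev t)) c
        _ ≤ ((2 : Cardinal) ^ κ + 1) ^ c :=
              Cardinal.power_le_power_right (add_le_add_left hW 1)
        _ ≤ ((2 : Cardinal) ^ κ) ^ c := Cardinal.power_le_power_right haddone
        _ = 2 ^ (κ * c) := (Cardinal.power_mul).symm
        _ ≤ 2 ^ κ := Cardinal.power_le_power_left two_ne_zero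
              (le_trans (mul_le_mul' le_rfl hcκ) hκκ.le)
      calc #(Dfun t) = #((prev t ∪ pfn '' SS (prev t) : Set X)) := by rw [hDt t]
      _ ≤ #(prev t) + #(pfn '' SS (prev t)) := Cardinal.mk_union_le _ _
      _ ≤ 2 ^ κ + 2 ^ κ := add_le_add hprevcard (le_trans Cardinal.mk_image_le hS)
      _ = 2 ^ κ := Cardinal.add_eq_self h2κ
    exact fun t => IsWellFounded.induction (· < ·) t hind
  have hDcard : #D ≤ 2 ^ κ := by
    calc #D ≤ Cardinal.sum (fun t : T => #(Dfun t)) := Cardinal.mk_iUnion_le_sum_mk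
    _ ≤ Cardinal.sum (fun _ : T => 2 ^ κ) := Cardinal.sum_le_sum _ _ hcard
    _ = #T * 2 ^ κ := Cardinal.sum_const' _ _
    _ ≤ 2 ^ κ * 2 ^ κ := mul_le_mul' hTcard le_rfl
    _ = 2 ^ κ := hpow
  refine ⟨D, hDcard, ?_⟩
  -- θ-density: the closure of every nonempty open set meets `D`
  intro V hV hVne
  by_contra hcon
  rw [Set.not_nonempty_iff_eq_empty] at hcon
  have hDV : ∀ d ∈ D, d ∉ closure V := by
    intro d hd hdc
    exact absurd hcon (Set.Nonempty.ne_empty ⟨d, hdc, hd⟩)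
  set 𝔅 : Set (Set X) := {B | (∃ z ∈ D, B ∈ ℬ z) ∧ B ∩ V = ∅} with h𝔅def
  have h𝔅open : ∀ B ∈ 𝔅, IsOpen B ∧ B.Nonempty := by
    rintro B ⟨⟨z, _, hzB⟩, _⟩
    exact (hℬ z).1 B hzB
  set P : Set (Set (Set X)) := {A | A ⊆ 𝔅 ∧ A.PairwiseDisjoint id} with hPdef
  have hzorn : ∀ C ⊆ P, IsChain (· ⊆ ·) C → ∃ ub ∈ P, ∀ s ∈ C, s ⊆ ub := by
    intro C hCP hchain
    refine ⟨⋃₀ C, ⟨?_, ?_⟩, fun s hs => subset_sUnion_of_mem hs⟩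
    · exact sUnion_subset fun A hA => (hCP hA).1
    · intro a ha b hb hab
      obtain ⟨A, hA, haA⟩ := ha
      obtain ⟨B, hB, hbB⟩ := hb
      rcases hchain.total hA hB with h | h
      · exact (hCP hB).2 (h haA) hbB hab
      · exact (hCP hA).2 haA (h hbB) hab
  obtain ⟨M, hM⟩ := zorn_subset P hzorn
  have hMP := hM.1
  have hMcell : #M ≤ c := aux_cellular_le X (fun U hU => h𝔅open U (hMP.1 hU)) hMP.2
  by_cases hcl : closure (⋃₀ M) = Set.univ
  · obtain ⟨x, hx⟩ := hVne
    have hxcl : x ∈ closure (⋃₀ M) := by rw [hcl]; exact mem_univ x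
    obtain ⟨y, hyV, hyM⟩ := mem_closure_iff.mp hxcl V hV hx
    obtain ⟨B, hBM, hyB⟩ := hyM
    exact absurd (hMP.1 hBM).2 (Set.Nonempty.ne_empty ⟨y, hyB, hyV⟩)
  · have hMsub : M ⊆ BS D := by
      intro B hB
      obtain ⟨z, hzD, hzB⟩ := (hMP.1 hB).1
      exact mem_iUnion₂.mpr ⟨z, hzD, hzB⟩
    have hpD : pfn M ∈ D := hkey M hMsub hMcell
    have hp1 : pfn M ∉ closure (⋃₀ M) := hpfn M hcl
    have hp2 : pfn M ∉ closure V := hDV _ hpD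
    have hNopen : IsOpen ((closure V)ᶜ ∩ (closure (⋃₀ M))ᶜ) :=
      (isClosed_closure.isOpen_compl).inter (isClosed_closure.isOpen_compl)
    have hpN : pfn M ∈ (closure V)ᶜ ∩ (closure (⋃₀ M))ᶜ := ⟨hp2, hp1⟩
    obtain ⟨B', hB'mem, hB'sub⟩ := (hℬ (pfn M)).2 _ hNopen hpN
    have hB'ne : B'.Nonempty := ((hℬ (pfn M)).1 B' hB'mem).2
    have hB'V : B' ∩ V = ∅ := by
      apply eq_empty_iff_forall_notMem.mpr
      rintro y ⟨hyB', hyV⟩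
      exact (hB'sub hyB').1 (subset_closure hyV)
    have hB'𝔅 : B' ∈ 𝔅 := ⟨⟨pfn M, hpD, hB'mem⟩, hB'V⟩
    have hB'notM : B' ∉ M := by
      intro hmem
      obtain ⟨y, hy⟩ := hB'ne
      exact (hB'sub hy).2 (subset_closure (mem_sUnion_of_mem hy hmem))
    have hins : insert B' M ∈ P := by
      refine ⟨insert_subset hB'𝔅 hMP.1, hMP.2.insert ?_⟩
      intro B hB _
      rw [Set.disjoint_left]
      intro y hyB' hyB
      exact (hB'sub hyB').2 (subset_closure (mem_sUnion_of_mem hyB hB))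
    exact hB'notM (hM.2 hins (subset_insert _ _) (mem_insert _ _))

theorem stmt12 (n : ℕ) (hn : 2 ≤ n) (X : Type u) [TopologicalSpace X]
    (hX : NHausdorff n X) (hqr : Quasiregular X) (hhom : Homogeneous X) :
    #X ≤ 2 ^ (cellularity X * piCharacter X) := by
  classical
  rcases isEmpty_or_nonempty X with hE | hNE
  · exact le_trans (le_of_eq (Cardinal.mk_eq_zero X)) zero_le
  obtain ⟨e⟩ := id hNE
  set c := cellularity X with hc
  set π := piCharacter X with hπdef
  set κ := c * π with hκdef
  have hc0 : ℵ₀ ≤ c := le_max_left _ _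
  have hπ0 : ℵ₀ ≤ π := le_max_left _ _
  have h1π : (1 : Cardinal) ≤ π := le_trans Cardinal.one_le_aleph0 hπ0
  have h1c : (1 : Cardinal) ≤ c := le_trans Cardinal.one_le_aleph0 hc0
  have hcκ : c ≤ κ := by
    calc c = c * 1 := (mul_one c).symm
    _ ≤ c * π := mul_le_mul_right h1π c
  have hπκ : π ≤ κ := by
    calc π = 1 * π := (one_mul π).symm
    _ ≤ c * π := mul_le_mul_left h1c π
  have hκ0 : ℵ₀ ≤ κ := hc0.trans hcκ
  have h2κ : ℵ₀ ≤ 2 ^ κ := hκ0.trans (Cardinal.cantor κ).le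
  have hpow : ((2 : Cardinal) ^ κ) * (2 ^ κ) = 2 ^ κ := Cardinal.mul_eq_self h2κ
  obtain ⟨D, hDcard, hDdense⟩ := aux_exists_theta_dense X
  obtain ⟨Be, hBe, hBecard⟩ := aux_exists_small_piBase X e
  set ι := ↥Be with hιdef
  -- shrink each member of the π-base at `e` to a regular closed piece
  have hQex : ∀ U : ι, ∃ Q : Set X, IsOpen Q ∧ Q.Nonempty ∧ closure Q ⊆ (U : Set X) :=
    fun U => hqr U.1 (hBe.1 U.1 U.2).1 (hBe.1 U.1 U.2).2
  choose Q hQopen hQne hQsub using hQex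
  -- the ultrafilter on the index set
  set Xi : Set X → Set ι := fun V => {U : ι | closure (Q U) ⊆ V} with hXidef
  have hXi_ne : ∀ V : Set X, IsOpen V → e ∈ V → (Xi V).Nonempty := by
    intro V hV heV
    obtain ⟨U, hUmem, hUsub⟩ := hBe.2 V hV heV
    exact ⟨⟨U, hUmem⟩, (hQsub ⟨U, hUmem⟩).trans hUsub⟩
  haveI hne𝒱 : Nonempty {V : Set X // IsOpen V ∧ e ∈ V} :=
    ⟨⟨Set.univ, isOpen_univ, mem_univ e⟩⟩
  haveI hneι : Nonempty ι := by
    obtain ⟨U, hU, -⟩ := hBe.2 Set.univ isOpen_univ (mem_univ e)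
    exact ⟨⟨U, hU⟩⟩
  set Fl : Filter ι :=
    ⨅ V : {V : Set X // IsOpen V ∧ e ∈ V}, Filter.principal (Xi V.1) with hFldef
  haveI hFlne : Fl.NeBot := by
    apply Filter.iInf_neBot_of_directed
    · intro V1 V2
      refine ⟨⟨V1.1 ∩ V2.1, V1.2.1.inter V2.2.1, V1.2.2, V2.2.2⟩, ?_, ?_⟩
      · exact Filter.principal_mono.mpr (fun U hU => hU.trans inter_subset_left)
      · exact Filter.principal_mono.mpr (fun U hU => hU.trans inter_subset_right)
    · intro V
      exact Filter.principal_neBot_iff.mpr (hXi_ne V.1 V.2.1 V.2.2)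
  set w : Ultrafilter ι := Ultrafilter.of Fl with hwdef
  have hw : ∀ V : Set X, IsOpen V → e ∈ V → Xi V ∈ w := by
    intro V hV heV
    have h1 : Xi V ∈ Fl := Filter.mem_iInf_of_mem ⟨V, hV, heV⟩ (Filter.mem_principal_self _)
    exact Filter.le_def.mp (Ultrafilter.of_le Fl) _ h1
  -- homeomorphisms witnessing homogeneity
  choose hx hhx_eq using fun x : X => hhom e x
  -- the coding map
  have hsx : ∀ (x : X) (U : ι), (closure ((hx x) '' Q U) ∩ D).Nonempty := by
    intro x U
    exact hDdense _ ((hx x).isOpenMap _ (hQopen U)) ((hQne U).image _)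
  set s : X → ι → ↥D := fun x U => ⟨(hsx x U).choose, (hsx x U).choose_spec.2⟩ with hsdef
  have hs_cl : ∀ (x : X) (U : ι), ((s x U : X)) ∈ closure ((hx x) '' Q U) :=
    fun x U => (hsx x U).choose_spec.1
  -- convergence of the code along the ultrafilter
  have hconv : ∀ (x : X) (V : Set X), IsOpen V → x ∈ V →
      {U : ι | ((s x U : X)) ∈ V} ∈ w := by
    intro x V hV hxV
    have hpre : IsOpen ((hx x) ⁻¹' V) := hV.preimage (hx x).continuous
    have hepre : e ∈ (hx x) ⁻¹' V := by
      rw [Set.mem_preimage, hhx_eq]; exact hxV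
    refine Filter.mem_of_superset (hw _ hpre hepre) ?_
    intro U hU
    have h1 : closure ((hx x) '' Q U) = (hx x) '' closure (Q U) :=
      ((hx x).image_closure _).symm
    have h2 : ((s x U : X)) ∈ (hx x) '' closure (Q U) := h1 ▸ hs_cl x U
    obtain ⟨y, hy, hyeq⟩ := h2
    have h3 := hU hy
    rw [Set.mem_preimage] at h3
    show ((s x U : X)) ∈ V
    rw [← hyeq]
    exact h3
  -- each fiber of the coding map has fewer than `n` points
  have hfiber : ∀ σ : ι → ↥D, #(s ⁻¹' {σ}) ≤ ((n - 1 : ℕ) : Cardinal) := by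
    intro σ
    by_contra hle
    push_neg at hle
    have hn' : ((n : ℕ) : Cardinal) ≤ #(s ⁻¹' {σ}) := by
      have h1 : ((n - 1 : ℕ) : Cardinal) + 1 ≤ #(s ⁻¹' {σ}) :=
        (Cardinal.add_one_le_succ _).trans (Order.succ_le_of_lt hle)
      have h2 : ((n - 1 : ℕ) : Cardinal) + 1 = ((n : ℕ) : Cardinal) := by
        have h3 : (n - 1) + 1 = n := by omega
        exact_mod_cast congrArg (fun m : ℕ => (m : Cardinal.{u})) h3
      rwa [h2] at h1
    obtain ⟨Sf, hSf⟩ := Cardinal.le_mk_iff_exists_set.mp hn'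
    rw [Cardinal.mk_set_eq_nat_iff_finset] at hSf
    obtain ⟨t, hts, htcard⟩ := hSf
    let eqv := t.equivFinOfCardEq htcard
    let f : Fin n ↪ X := ⟨fun i => ((eqv.symm i).1 : X),
      fun i j hij => eqv.symm.injective (Subtype.ext (Subtype.ext hij))⟩
    obtain ⟨Uop, hUop, hUcap⟩ := hX f
    have hmemw : ∀ i : Fin n, {U : ι | ((σ U : X)) ∈ Uop i} ∈ w := by
      intro i
      have hfib : s (f i) = σ := (eqv.symm i).1.2
      have h3 := hconv (f i) (Uop i) (hUop i).1 (hUop i).2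
      rw [hfib] at h3
      exact h3
    have hall : (⋂ i : Fin n, {U : ι | ((σ U : X)) ∈ Uop i}) ∈ w := by
      rw [← Ultrafilter.mem_coe, Filter.iInter_mem]
      exact hmemw
    obtain ⟨U0, hU0⟩ := Ultrafilter.nonempty_of_mem hall
    have hU0' : ((σ U0 : X)) ∈ ⋂ i, Uop i :=
      mem_iInter.mpr (fun i => mem_iInter.mp hU0 i)
    rw [hUcap] at hU0'
    exact hU0'
  -- counting
  have hcount : #X ≤ #(ι → ↥D) * ((n - 1 : ℕ) : Cardinal) :=
    Cardinal.mk_le_mk_mul_of_mk_preimage_le s hfiber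
  have hιcard : #ι ≤ κ := le_trans hBecard hπκ
  have h2κne : (2 : Cardinal) ^ κ ≠ 0 :=
    (lt_of_lt_of_le zero_lt_one (le_trans Cardinal.one_le_aleph0 h2κ)).ne'
  have harrow : #(ι → ↥D) ≤ 2 ^ κ := by
    rw [← Cardinal.power_def]
    calc #↥D ^ #ι ≤ ((2 : Cardinal) ^ κ) ^ #ι := Cardinal.power_le_power_right hDcard
    _ ≤ ((2 : Cardinal) ^ κ) ^ κ := Cardinal.power_le_power_left h2κne hιcard
    _ = 2 ^ (κ * κ) := (Cardinal.power_mul).symm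
    _ = 2 ^ κ := by rw [Cardinal.mul_eq_self hκ0]
  have hn1 : ((n - 1 : ℕ) : Cardinal) ≤ 2 ^ κ := le_trans (Cardinal.nat_lt_aleph0 _).le h2κ
  calc #X ≤ #(ι → ↥D) * ((n - 1 : ℕ) : Cardinal) := hcount
  _ ≤ ((2 : Cardinal) ^ κ) * (2 ^ κ) := mul_le_mul' harrow hn1
  _ = 2 ^ κ := hpow
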